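/- Let u, v, w, x, y, z be positive real numbers with u + v + w + x + y + z = π and sin u · sin v · sin w = sin x · sin y · sin z. Then there exist three affinely independent points A, B, C in the Euclidean plane ℝ² and a point P in the interior of the triangle ABC (the interior of the convex hull of {A, B, C}) such that ∠ P A B = u, ∠ P A C = x, ∠ P B C = v, ∠ P B A = y, ∠ P C A = w and ∠ P C B = z, where ∠ X Y Z denotes the undirected angle at the vertex Y. -/

import Mathlib

open EuclideanGeometry Real

noncomputable def ee (θ : ℝ) : EuclideanSpace ℝ (Fin 2) := !₂[Real.cos θ, Real.sin θ]

lemma ee_zero (θ : ℝ) : (ee θ) 0 = Real.cos θ := rfl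
lemma ee_one (θ : ℝ) : (ee θ) 1 = Real.sin θ := rfl

lemma inner_ee (θ₁ θ₂ : ℝ) : inner ℝ (ee θ₁) (ee θ₂) = Real.cos (θ₁ - θ₂) := by
  rw [PiLp.inner_apply, Real.cos_sub]
  simp [ee, Fin.sum_univ_two, mul_comm]

lemma norm_ee (θ : ℝ) : ‖ee θ‖ = 1 := by
  rw [EuclideanSpace.norm_eq]
  simp [ee, Fin.sum_univ_two, Real.sin_sq_add_cos_sq]

lemma ee_ne_zero (θ : ℝ) : ee θ ≠ 0 := by
  intro h
  have := norm_ee θ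
  rw [h] at this
  simp at this

lemma angle_ee {ρ₁ ρ₂ : ℝ} (h1 : 0 < ρ₁) (h2 : 0 < ρ₂) (θ₁ θ₂ : ℝ) :
    InnerProductGeometry.angle (ρ₁ • ee θ₁) (ρ₂ • ee θ₂) = Real.arccos (Real.cos (θ₁ - θ₂)) := by
  rw [InnerProductGeometry.angle_smul_left_of_pos _ _ h1,
    InnerProductGeometry.angle_smul_right_of_pos _ _ h2, InnerProductGeometry.angle,
    inner_ee, norm_ee, norm_ee]
  norm_num

lemma ee_ext {a b : EuclideanSpace ℝ (Fin 2)} (h0 : a 0 = b 0) (h1 : a 1 = b 1) : a = b := by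
  ext i
  fin_cases i <;> assumption

lemma ee_add_pi (θ : ℝ) : ee (θ + π) = - ee θ := by
  apply ee_ext <;> simp [ee, Real.cos_add, Real.sin_add]

lemma ee_two_pi : ee (2 * π) = ee 0 := by
  have h1 := ee_add_pi π
  have h2 := ee_add_pi 0
  rw [zero_add] at h2
  rw [show (2:ℝ) * π = π + π by ring, h1, h2, neg_neg]

lemma keyid (a b θ : ℝ) :
    Real.sin a • ee (θ + (π - (a + b))) = Real.sin b • ee θ + Real.sin (a + b) • ee (θ + (π - a)) := by
  apply ee_ext <;>
    simp only [PiLp.smul_apply, PiLp.add_apply, ee_zero, ee_one, smul_eq_mul, Real.cos_add,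
      Real.sin_add, Real.cos_sub, Real.sin_sub, Real.cos_pi, Real.sin_pi]
  · linear_combination (Real.cos θ * Real.sin b) * (Real.sin_sq_add_cos_sq a)
  · linear_combination (Real.sin θ * Real.sin b) * (Real.sin_sq_add_cos_sq a)

lemma diffid (c a b θ : ℝ) :
    (c * Real.sin a) • ee (θ + (π - (a + b))) - (c * Real.sin b) • ee θ
      = (c * Real.sin (a + b)) • ee (θ + (π - a)) := by
  rw [← smul_smul, ← smul_smul, ← smul_smul, keyid a b θ, smul_add]
  abel

set_option maxHeartbeats 2000000 in
theorem ceva_trig_converse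
    (u v w x y z : ℝ)
    (hu : 0 < u) (hv : 0 < v) (hw : 0 < w)
    (hx : 0 < x) (hy : 0 < y) (hz : 0 < z)
    (hsum : u + v + w + x + y + z = Real.pi)
    (heq : Real.sin u * Real.sin v * Real.sin w = Real.sin x * Real.sin y * Real.sin z) :
    ∃ A B C P : EuclideanSpace ℝ (Fin 2),
      AffineIndependent ℝ ![A, B, C] ∧
      P ∈ interior (convexHull ℝ ({A, B, C} : Set (EuclideanSpace ℝ (Fin 2)))) ∧
      ∠ P A B = u ∧ ∠ P A C = x ∧ ∠ P B C = v ∧ ∠ P B A = y ∧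
      ∠ P C A = w ∧ ∠ P C B = z := by
  have su : 0 < Real.sin u := Real.sin_pos_of_pos_of_lt_pi hu (by linarith)
  have sv : 0 < Real.sin v := Real.sin_pos_of_pos_of_lt_pi hv (by linarith)
  have sw : 0 < Real.sin w := Real.sin_pos_of_pos_of_lt_pi hw (by linarith)
  have sx : 0 < Real.sin x := Real.sin_pos_of_pos_of_lt_pi hx (by linarith)
  have sy : 0 < Real.sin y := Real.sin_pos_of_pos_of_lt_pi hy (by linarith)
  have sz : 0 < Real.sin z := Real.sin_pos_of_pos_of_lt_pi hz (by linarith)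
  have suy : 0 < Real.sin (u + y) :=
    Real.sin_pos_of_pos_of_lt_pi (by linarith) (by linarith)
  have svz : 0 < Real.sin (v + z) :=
    Real.sin_pos_of_pos_of_lt_pi (by linarith) (by linarith)
  have swx : 0 < Real.sin (w + x) :=
    Real.sin_pos_of_pos_of_lt_pi (by linarith) (by linarith)
  set K : ℝ := Real.sin u * Real.sin v / Real.sin x with hK
  have hKpos : 0 < K := by positivity
  set θB : ℝ := π - (u + y) with hθB
  set θC : ℝ := π + (w + x) with hθC
  set A : EuclideanSpace ℝ (Fin 2) := (Real.sin y * Real.sin z) • ee 0 with hA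
  set B : EuclideanSpace ℝ (Fin 2) := (Real.sin u * Real.sin z) • ee θB with hB
  set C : EuclideanSpace ℝ (Fin 2) := (Real.sin u * Real.sin v) • ee θC with hC
  -- difference identities
  have hBA : B - A = (Real.sin z * Real.sin (u + y)) • ee (0 + (π - u)) := by
    rw [hA, hB, show θB = 0 + (π - (u + y)) from by rw [hθB]; ring,
      mul_comm (Real.sin u) (Real.sin z), mul_comm (Real.sin y) (Real.sin z)]
    exact diffid (Real.sin z) u y 0
  have hCB : C - B = (Real.sin u * Real.sin (v + z)) • ee (θB + (π - v)) := by
    rw [hB, hC, show θC = θB + (π - (v + z)) from by rw [hθB, hθC]; linarith]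
    exact diffid (Real.sin u) v z θB
  have hAC : A - C = (K * Real.sin (w + x)) • ee (θC + (π - w)) := by
    have e1 : K * Real.sin x = Real.sin u * Real.sin v := by
      rw [hK]; field_simp
    have e2 : K * Real.sin w = Real.sin y * Real.sin z := by
      rw [hK]; field_simp; linear_combination heq
    rw [hA, hC, ← e1, ← e2, ← ee_two_pi,
      show (2:ℝ) * π = θC + (π - (w + x)) from by rw [hθC]; ring]
    exact diffid K w x θC
  have hAB : A - B = (Real.sin z * Real.sin (u + y)) • ee ((0 + (π - u)) + π) := by
    rw [ee_add_pi, smul_neg, ← neg_sub B A, hBA]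
  have hBC : B - C = (Real.sin u * Real.sin (v + z)) • ee ((θB + (π - v)) + π) := by
    rw [ee_add_pi, smul_neg, ← neg_sub C B, hCB]
  have hCA : C - A = (K * Real.sin (w + x)) • ee ((θC + (π - w)) + π) := by
    rw [ee_add_pi, smul_neg, ← neg_sub A C, hAC]
  have hPA : (0 : EuclideanSpace ℝ (Fin 2)) - A = (Real.sin y * Real.sin z) • ee (0 + π) := by
    rw [hA, ee_add_pi, smul_neg, zero_sub]
  have hPB : (0 : EuclideanSpace ℝ (Fin 2)) - B = (Real.sin u * Real.sin z) • ee (θB + π) := by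
    rw [hB, ee_add_pi, smul_neg, zero_sub]
  have hPC : (0 : EuclideanSpace ℝ (Fin 2)) - C = (Real.sin u * Real.sin v) • ee (θC + π) := by
    rw [hC, ee_add_pi, smul_neg, zero_sub]
  -- affine independence
  have hangBAC : ∠ B A C = u + x := by
    show InnerProductGeometry.angle (B - A) (C - A) = u + x
    rw [hBA, hCA, angle_ee (by positivity) (by positivity),
      show (0 + (π - u)) - ((θC + (π - w)) + π) = -((u + x) + 2 * π) from by rw [hθC]; ring,
      Real.cos_neg, Real.cos_add_two_pi]
    exact Real.arccos_cos (by linarith) (by linarith)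
  have hind : AffineIndependent ℝ ![A, B, C] := by
    rw [affineIndependent_iff_not_collinear_set, Set.insert_comm,
      EuclideanGeometry.collinear_iff_eq_or_eq_or_angle_eq_zero_or_angle_eq_pi]
    push_neg
    refine ⟨?_, ?_, ?_, ?_⟩
    · intro h
      have h2 := hBA
      rw [h, sub_self] at h2
      exact smul_ne_zero (by positivity) (ee_ne_zero _) h2.symm
    · intro h
      have h2 := hCA
      rw [h, sub_self] at h2
      exact smul_ne_zero (by positivity) (ee_ne_zero _) h2.symm
    · rw [hangBAC]; positivity
    · rw [hangBAC]; intro h; linarith [h]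
  -- affine span is everything
  have htop : affineSpan ℝ (Set.range ![A, B, C]) = ⊤ := by
    rw [hind.affineSpan_eq_top_iff_card_eq_finrank_add_one]
    simp [finrank_euclideanSpace_fin]
  set bb : AffineBasis (Fin 3) ℝ (EuclideanSpace ℝ (Fin 2)) := ⟨![A, B, C], hind, htop⟩ with hbbdef
  have hbb : ⇑bb = ![A, B, C] := rfl
  -- barycentric weights for 0
  set Λ : ℝ := Real.sin (v + z) / (Real.sin y * Real.sin z)
    + Real.sin (w + x) / (Real.sin u * Real.sin z)
    + Real.sin (u + y) / (Real.sin u * Real.sin v) with hΛ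
  have hΛpos : 0 < Λ := by rw [hΛ]; positivity
  set W : Fin 3 → ℝ := ![Real.sin (v + z) / (Real.sin y * Real.sin z) / Λ,
    Real.sin (w + x) / (Real.sin u * Real.sin z) / Λ,
    Real.sin (u + y) / (Real.sin u * Real.sin v) / Λ] with hW
  have hW1 : ∑ i, W i = 1 := by
    rw [hW, Fin.sum_univ_three]
    simp only [Matrix.cons_val_zero, Matrix.cons_val_one, Matrix.head_cons, Matrix.cons_val_two,
      Matrix.tail_cons]
    rw [hΛ]
    field_simp
  have h0vec : Real.sin (v + z) • ee 0 + Real.sin (w + x) • ee θB + Real.sin (u + y) • ee θC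
      = 0 := by
    rw [show v + z = π - ((u + y) + (w + x)) from by linarith, hθB, hθC]
    apply ee_ext <;>
      simp only [PiLp.add_apply, PiLp.smul_apply, PiLp.zero_apply, ee_zero, ee_one, smul_eq_mul,
        Real.sin_add, Real.cos_add, Real.sin_sub, Real.cos_sub, Real.sin_pi, Real.cos_pi,
        Real.sin_zero, Real.cos_zero] <;>
      ring
  have h0 : Finset.univ.affineCombination ℝ (⇑bb) W = 0 := by
    rw [Finset.affineCombination_eq_linear_combination _ _ _ hW1, hbb, Fin.sum_univ_three]
    simp only [Matrix.cons_val_zero, Matrix.cons_val_one, Matrix.head_cons, Matrix.cons_val_two,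
      Matrix.tail_cons, hW]
    rw [hA, hB, hC, smul_smul, smul_smul, smul_smul,
      show Real.sin (v + z) / (Real.sin y * Real.sin z) / Λ * (Real.sin y * Real.sin z)
        = Λ⁻¹ * Real.sin (v + z) from by field_simp,
      show Real.sin (w + x) / (Real.sin u * Real.sin z) / Λ * (Real.sin u * Real.sin z)
        = Λ⁻¹ * Real.sin (w + x) from by field_simp,
      show Real.sin (u + y) / (Real.sin u * Real.sin v) / Λ * (Real.sin u * Real.sin v)
        = Λ⁻¹ * Real.sin (u + y) from by field_simp,
      ← smul_smul, ← smul_smul, ← smul_smul, ← smul_add, ← smul_add, h0vec, smul_zero]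
  have hmem : (0 : EuclideanSpace ℝ (Fin 2))
      ∈ interior (convexHull ℝ ({A, B, C} : Set (EuclideanSpace ℝ (Fin 2)))) := by
    have hrange : Set.range ⇑bb = ({A, B, C} : Set (EuclideanSpace ℝ (Fin 2))) := by
      rw [hbb]
      simp_rw [Matrix.range_cons, Matrix.range_empty, Set.singleton_union, LawfulSingleton.insert_empty_eq]
    rw [← hrange, bb.interior_convexHull]
    intro i
    have hc : bb.coord i 0 = W i := by
      rw [← h0]
      exact bb.coord_apply_combination_of_mem (Finset.mem_univ i) hW1
    rw [hc]
    fin_cases i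
    · show 0 < Real.sin (v + z) / (Real.sin y * Real.sin z) / Λ
      exact div_pos (div_pos svz (by positivity)) hΛpos
    · show 0 < Real.sin (w + x) / (Real.sin u * Real.sin z) / Λ
      exact div_pos (div_pos swx (by positivity)) hΛpos
    · show 0 < Real.sin (u + y) / (Real.sin u * Real.sin v) / Λ
      exact div_pos (div_pos suy (by positivity)) hΛpos
  refine ⟨A, B, C, 0, hind, hmem, ?_, ?_, ?_, ?_, ?_, ?_⟩
  · show InnerProductGeometry.angle ((0 : EuclideanSpace ℝ (Fin 2)) - A) (B - A) = u
    rw [hPA, hBA, angle_ee (by positivity) (by positivity),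
      show (0 + π) - (0 + (π - u)) = u from by ring]
    exact Real.arccos_cos hu.le (by linarith)
  · show InnerProductGeometry.angle ((0 : EuclideanSpace ℝ (Fin 2)) - A) (C - A) = x
    rw [hPA, hCA, angle_ee (by positivity) (by positivity),
      show (0 + π) - ((θC + (π - w)) + π) = -(x + 2 * π) from by rw [hθC]; ring,
      Real.cos_neg, Real.cos_add_two_pi]
    exact Real.arccos_cos hx.le (by linarith)
  · show InnerProductGeometry.angle ((0 : EuclideanSpace ℝ (Fin 2)) - B) (C - B) = v
    rw [hPB, hCB, angle_ee (by positivity) (by positivity),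
      show (θB + π) - (θB + (π - v)) = v from by ring]
    exact Real.arccos_cos hv.le (by linarith)
  · show InnerProductGeometry.angle ((0 : EuclideanSpace ℝ (Fin 2)) - B) (A - B) = y
    rw [hPB, hAB, angle_ee (by positivity) (by positivity),
      show (θB + π) - ((0 + (π - u)) + π) = -y from by rw [hθB]; ring, Real.cos_neg]
    exact Real.arccos_cos hy.le (by linarith)
  · show InnerProductGeometry.angle ((0 : EuclideanSpace ℝ (Fin 2)) - C) (A - C) = w
    rw [hPC, hAC, angle_ee (by positivity) (by positivity),
      show (θC + π) - (θC + (π - w)) = w from by ring]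
    exact Real.arccos_cos hw.le (by linarith)
  · show InnerProductGeometry.angle ((0 : EuclideanSpace ℝ (Fin 2)) - C) (B - C) = z
    rw [hPC, hBC, angle_ee (by positivity) (by positivity),
      show (θC + π) - ((θB + (π - v)) + π) = -z from by rw [hθC, hθB]; linarith, Real.cos_neg]
    exact Real.arccos_cos hz.le (by linarith)
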